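/- arXiv:2008.10120 — 3 statements merged into one kernel-verified Lean document; each statement's English description precedes it below -/
import Mathlib

section
/- Let b₀, b₁ : ℝ → ℂ be bounded continuous π-periodic functions. There exist constants α, β ≥ 0, depending only on sup|b₀| and sup|b₁|, such that for every θ ∈ [−π, π] and every twice continuously differentiable π-periodic function u : ℝ → ℂ, one has (∫_0^π |b₁(y)(iθ u(y) + π u'(y)) + b₀(y) u(y)|² dy)^{1/2} ≤ α (∫_0^π |u(y)|² dy)^{1/2} + β (∫_0^π |π² u''(y) + 2iθπ u'(y) + (4π² − θ²) u(y)|² dy)^{1/2}. -/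
open MeasureTheory Real Complex

lemma memL2_of_continuous (f : ℝ → ℝ) (hf : Continuous f) :
    MemLp f 2 (volume.restrict (Set.Ioc (0:ℝ) π)) := by
  have : IsFiniteMeasure (volume.restrict (Set.Ioc (0:ℝ) π)) := by
    constructor
    rw [Measure.restrict_apply_univ, Real.volume_Ioc]
    exact ENNReal.ofReal_lt_top
  obtain ⟨C, hC⟩ := (isCompact_Icc (a := (0:ℝ)) (b := π)).exists_bound_of_continuousOn
    hf.continuousOn
  exact MemLp.of_bound hf.aestronglyMeasurable C
    (MeasureTheory.ae_restrict_of_forall_mem measurableSet_Ioc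
      (fun x hx => hC x (Set.Ioc_subset_Icc_self hx)))

lemma cs_integral (f g : ℝ → ℂ) (hf : Continuous f) (hg : Continuous g) :
    ∫ y in (0:ℝ)..π, ‖f y‖ * ‖g y‖ ≤
      Real.sqrt (∫ y in (0:ℝ)..π, ‖f y‖ ^ 2) * Real.sqrt (∫ y in (0:ℝ)..π, ‖g y‖ ^ 2) := by
  rw [intervalIntegral.integral_of_le pi_pos.le, intervalIntegral.integral_of_le pi_pos.le,
    intervalIntegral.integral_of_le pi_pos.le]
  have hpq : Real.HolderConjugate 2 2 := Real.HolderConjugate.two_two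
  have h := MeasureTheory.integral_mul_le_Lp_mul_Lq_of_nonneg (μ := volume.restrict (Set.Ioc (0:ℝ) π)) hpq
    (Filter.Eventually.of_forall (fun x => norm_nonneg (f x)))
    (Filter.Eventually.of_forall (fun x => norm_nonneg (g x)))
    (by simpa using memL2_of_continuous _ hf.norm)
    (by simpa using memL2_of_continuous _ hg.norm)
  calc ∫ y in Set.Ioc (0:ℝ) π, ‖f y‖ * ‖g y‖ ≤ _ := h
  _ = Real.sqrt (∫ y in Set.Ioc (0:ℝ) π, ‖f y‖ ^ 2) * Real.sqrt (∫ y in Set.Ioc (0:ℝ) π, ‖g y‖ ^ 2) := by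
      rw [Real.sqrt_eq_rpow, Real.sqrt_eq_rpow]
      congr 2 <;> · apply integral_congr_ae; filter_upwards with x
                    rw [← Real.rpow_natCast (‖_‖) 2]; norm_num

lemma cs_integral' (f g : ℝ → ℂ) (hf : Continuous f) (hg : Continuous g) :
    ‖∫ y in (0:ℝ)..π, f y * g y‖ ≤
      Real.sqrt (∫ y in (0:ℝ)..π, ‖f y‖ ^ 2) * Real.sqrt (∫ y in (0:ℝ)..π, ‖g y‖ ^ 2) := by
  calc ‖∫ y in (0:ℝ)..π, f y * g y‖ ≤ ∫ y in (0:ℝ)..π, ‖f y * g y‖ :=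
        intervalIntegral.norm_integral_le_integral_norm pi_pos.le
  _ = ∫ y in (0:ℝ)..π, ‖f y‖ * ‖g y‖ := by simp [norm_mul]
  _ ≤ _ := cs_integral f g hf hg

lemma sq_sqrt_integral (f : ℝ → ℂ) :
    Real.sqrt (∫ y in (0:ℝ)..π, ‖f y‖ ^ 2) ^ 2 = ∫ y in (0:ℝ)..π, ‖f y‖ ^ 2 :=
  Real.sq_sqrt (intervalIntegral.integral_nonneg pi_pos.le (fun x _ => sq_nonneg _))

lemma minkowski_integral (f g : ℝ → ℂ) (hf : Continuous f) (hg : Continuous g) :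
    Real.sqrt (∫ y in (0:ℝ)..π, ‖f y + g y‖ ^ 2) ≤
      Real.sqrt (∫ y in (0:ℝ)..π, ‖f y‖ ^ 2) + Real.sqrt (∫ y in (0:ℝ)..π, ‖g y‖ ^ 2) := by
  set A := Real.sqrt (∫ y in (0:ℝ)..π, ‖f y‖ ^ 2) with hA
  set B := Real.sqrt (∫ y in (0:ℝ)..π, ‖g y‖ ^ 2) with hB
  have hA0 : 0 ≤ A := Real.sqrt_nonneg _
  have hB0 : 0 ≤ B := Real.sqrt_nonneg _
  have key : (∫ y in (0:ℝ)..π, ‖f y + g y‖ ^ 2) ≤ (A + B) ^ 2 := by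
    have h1 : (∫ y in (0:ℝ)..π, ‖f y + g y‖ ^ 2) ≤
        ∫ y in (0:ℝ)..π, (‖f y‖ ^ 2 + 2 * (‖f y‖ * ‖g y‖) + ‖g y‖ ^ 2) := by
      apply intervalIntegral.integral_mono_on pi_pos.le
      · exact ((hf.add hg).norm.pow 2).intervalIntegrable _ _
      · exact ((hf.norm.pow 2).add (continuous_const.mul (hf.norm.mul hg.norm))|>.add
          (hg.norm.pow 2)).intervalIntegrable _ _
      · intro x _
        have := norm_add_le (f x) (g x)
        nlinarith [norm_nonneg (f x), norm_nonneg (g x), norm_nonneg (f x + g x)]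
    have h2 : ∫ y in (0:ℝ)..π, (‖f y‖ ^ 2 + 2 * (‖f y‖ * ‖g y‖) + ‖g y‖ ^ 2)
        = (∫ y in (0:ℝ)..π, ‖f y‖ ^ 2) + 2 * (∫ y in (0:ℝ)..π, ‖f y‖ * ‖g y‖)
          + (∫ y in (0:ℝ)..π, ‖g y‖ ^ 2) := by
      rw [intervalIntegral.integral_add, intervalIntegral.integral_add,
        intervalIntegral.integral_const_mul]
      · exact (hf.norm.pow 2).intervalIntegrable _ _
      · exact (continuous_const.mul (hf.norm.mul hg.norm)).intervalIntegrable _ _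
      · exact (((hf.norm.pow 2)).add (continuous_const.mul (hf.norm.mul hg.norm))).intervalIntegrable _ _
      · exact (hg.norm.pow 2).intervalIntegrable _ _
    have h3 := cs_integral f g hf hg
    rw [h2] at h1
    have hAs := sq_sqrt_integral f
    have hBs := sq_sqrt_integral g
    nlinarith [hAs, hBs, h3, h1]
  calc Real.sqrt (∫ y in (0:ℝ)..π, ‖f y + g y‖ ^ 2) ≤ Real.sqrt ((A + B) ^ 2) :=
        Real.sqrt_le_sqrt key
  _ = A + B := Real.sqrt_sq (by positivity)

lemma split4 (c1 c2 c3 c4 : ℂ) (f1 f2 f3 f4 : ℝ → ℂ)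
    (h1 : Continuous f1) (h2 : Continuous f2) (h3 : Continuous f3) (h4 : Continuous f4) :
    ∫ y in (0:ℝ)..π, (c1 * f1 y + c2 * f2 y + c3 * f3 y + c4 * f4 y) =
      c1 * (∫ y in (0:ℝ)..π, f1 y) + c2 * (∫ y in (0:ℝ)..π, f2 y)
        + c3 * (∫ y in (0:ℝ)..π, f3 y) + c4 * (∫ y in (0:ℝ)..π, f4 y) := by
  have i1 : IntervalIntegrable (fun y => c1 * f1 y) volume 0 π :=
    (continuous_const.mul h1).intervalIntegrable _ _
  have i2 : IntervalIntegrable (fun y => c2 * f2 y) volume 0 π :=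
    (continuous_const.mul h2).intervalIntegrable _ _
  have i3 : IntervalIntegrable (fun y => c3 * f3 y) volume 0 π :=
    (continuous_const.mul h3).intervalIntegrable _ _
  have i4 : IntervalIntegrable (fun y => c4 * f4 y) volume 0 π :=
    (continuous_const.mul h4).intervalIntegrable _ _
  rw [intervalIntegral.integral_add ((i1.add i2).add i3) i4,
    intervalIntegral.integral_add (i1.add i2) i3,
    intervalIntegral.integral_add i1 i2,
    intervalIntegral.integral_const_mul, intervalIntegral.integral_const_mul,
    intervalIntegral.integral_const_mul, intervalIntegral.integral_const_mul]

lemma ibp_identity (u : ℝ → ℂ) (hu : ContDiff ℝ 2 u) (hper : ∀ y, u (y + π) = u y) (θ : ℝ) :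
    (∫ y in (0:ℝ)..π,
        star (Complex.I * (θ:ℂ) * u y + (π:ℂ) * deriv u y)
          * (Complex.I * (θ:ℂ) * u y + (π:ℂ) * deriv u y)) =
      - ∫ y in (0:ℝ)..π, star (u y) *
          ((π:ℂ)^2 * deriv (deriv u) y + 2 * Complex.I * (θ:ℂ) * (π:ℂ) * deriv u y
            - (θ:ℂ)^2 * u y) := by
  have hcu : Continuous u := hu.continuous
  have hcdu : Continuous (deriv u) := hu.continuous_deriv (by norm_num)
  have hu1 : ContDiff ℝ 1 (deriv u) := by
    have h2 : ContDiff ℝ (1+1) u := by norm_num; exact hu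
    exact (contDiff_succ_iff_deriv.mp h2).2.2
  have hcddu : Continuous (deriv (deriv u)) := hu1.continuous_deriv le_rfl
  have hder : ∀ x, HasDerivAt u (deriv u x) x :=
    fun x => ((hu.differentiable (by norm_num)) x).hasDerivAt
  have hder2 : ∀ x, HasDerivAt (deriv u) (deriv (deriv u) x) x :=
    fun x => ((hu1.differentiable one_ne_zero) x).hasDerivAt
  have hup : u π = u 0 := by simpa using hper 0
  have hdup : deriv u π = deriv u 0 := by
    have : deriv u (0 + π) = deriv u 0 := by
      rw [← deriv_comp_add_const u π 0]
      congr 1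
      exact funext hper
    simpa using this
  -- integration by parts identities
  have key1 : (∫ x in (0:ℝ)..π,
      (star (deriv u x) * deriv u x + star (u x) * deriv (deriv u) x)) = 0 := by
    have h := intervalIntegral.integral_deriv_mul_eq_sub (a := (0:ℝ)) (b := π)
      (u := fun x => star (u x)) (u' := fun x => star (deriv u x))
      (v := deriv u) (v' := deriv (deriv u))
      (fun x _ => (hder x).star) (fun x _ => hder2 x)
      ((continuous_star.comp hcdu).intervalIntegrable _ _)
      (hcddu.intervalIntegrable _ _)
    simp only [hup, hdup] at h
    simpa using h
  have key2 : (∫ x in (0:ℝ)..π,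
      (star (deriv u x) * u x + star (u x) * deriv u x)) = 0 := by
    have h := intervalIntegral.integral_deriv_mul_eq_sub (a := (0:ℝ)) (b := π)
      (u := fun x => star (u x)) (u' := fun x => star (deriv u x))
      (v := u) (v' := deriv u)
      (fun x _ => (hder x).star) (fun x _ => hder x)
      ((continuous_star.comp hcdu).intervalIntegrable _ _)
      (hcdu.intervalIntegrable _ _)
    simp only [hup] at h
    simpa using h
  -- basic integrals
  set P := ∫ y in (0:ℝ)..π, star (u y) * u y with hP
  set Q := ∫ y in (0:ℝ)..π, star (u y) * deriv u y with hQ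
  set R := ∫ y in (0:ℝ)..π, star (deriv u y) * u y with hR
  set S := ∫ y in (0:ℝ)..π, star (deriv u y) * deriv u y with hS
  set T := ∫ y in (0:ℝ)..π, star (u y) * deriv (deriv u) y with hT
  have hscu : Continuous (fun y => star (u y)) := continuous_star.comp hcu
  have hscdu : Continuous (fun y => star (deriv u y)) := continuous_star.comp hcdu
  have hST : S + T = 0 := by
    rw [hS, hT, ← intervalIntegral.integral_add (f := (fun y => star (deriv u y) * deriv u y)) (g := (fun y => star (u y) * deriv (deriv u) y))
      ((hscdu.mul hcdu).intervalIntegrable _ _) ((hscu.mul hcddu).intervalIntegrable _ _)]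
    exact key1
  have hRQ : R + Q = 0 := by
    rw [hR, hQ, ← intervalIntegral.integral_add (f := (fun y => star (deriv u y) * u y)) (g := (fun y => star (u y) * deriv u y))
      ((hscdu.mul hcu).intervalIntegrable _ _) ((hscu.mul hcdu).intervalIntegrable _ _)]
    exact key2
  have hL : (∫ y in (0:ℝ)..π,
      star (Complex.I * (θ:ℂ) * u y + (π:ℂ) * deriv u y)
        * (Complex.I * (θ:ℂ) * u y + (π:ℂ) * deriv u y)) =
      (θ:ℂ)^2 * P + (-(Complex.I * θ * π)) * Q + (Complex.I * θ * π) * R + (π:ℂ)^2 * S := by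
    rw [hP, hQ, hR, hS, ← split4 _ _ _ _ (fun y => star (u y) * u y) (fun y => star (u y) * deriv u y) (fun y => star (deriv u y) * u y) (fun y => star (deriv u y) * deriv u y) (hscu.mul hcu) (hscu.mul hcdu)
      (hscdu.mul hcu) (hscdu.mul hcdu)]
    apply intervalIntegral.integral_congr
    intro y _
    simp only [star_add, star_mul', map_mul, Complex.star_def, Complex.conj_I,
      Complex.conj_ofReal]
    ring_nf
    rw [Complex.I_sq]
    ring
  have hRside : (∫ y in (0:ℝ)..π, star (u y) *
      ((π:ℂ)^2 * deriv (deriv u) y + 2 * Complex.I * (θ:ℂ) * (π:ℂ) * deriv u y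
        - (θ:ℂ)^2 * u y)) =
      (π:ℂ)^2 * T + (2 * Complex.I * θ * π) * Q + (-(θ:ℂ)^2) * P + 0 * P := by
    rw [hP, hQ, hT, ← split4 _ _ _ _ (fun y => star (u y) * deriv (deriv u) y) (fun y => star (u y) * deriv u y) (fun y => star (u y) * u y) (fun y => star (u y) * u y) (hscu.mul hcddu) (hscu.mul hcdu)
      (hscu.mul hcu) (hscu.mul hcu)]
    apply intervalIntegral.integral_congr
    intro y _
    ring
  rw [hL, hRside]
  have hT' : T = -S := by linear_combination hST
  have hR' : R = -Q := by linear_combination hRQ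
  rw [hT', hR']
  ring

lemma sqrt_int_mul_le (b f : ℝ → ℂ) (hb : Continuous b) (hf : Continuous f) (M : ℝ)
    (hM : ∀ y, ‖b y‖ ≤ M) :
    Real.sqrt (∫ y in (0:ℝ)..π, ‖b y * f y‖ ^ 2) ≤
      M * Real.sqrt (∫ y in (0:ℝ)..π, ‖f y‖ ^ 2) := by
  have hM0 : 0 ≤ M := le_trans (norm_nonneg _) (hM 0)
  have h1 : (∫ y in (0:ℝ)..π, ‖b y * f y‖ ^ 2) ≤ ∫ y in (0:ℝ)..π, M ^ 2 * ‖f y‖ ^ 2 := by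
    apply intervalIntegral.integral_mono_on pi_pos.le
    · exact ((hb.mul hf).norm.pow 2).intervalIntegrable _ _
    · exact (continuous_const.mul (hf.norm.pow 2)).intervalIntegrable _ _
    · intro x _
      rw [norm_mul, mul_pow]
      have h := hM x
      nlinarith [norm_nonneg (b x), sq_nonneg (‖f x‖),
        mul_le_mul h h (norm_nonneg (b x)) hM0]
  calc Real.sqrt (∫ y in (0:ℝ)..π, ‖b y * f y‖ ^ 2)
      ≤ Real.sqrt (∫ y in (0:ℝ)..π, M ^ 2 * ‖f y‖ ^ 2) := Real.sqrt_le_sqrt h1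
    _ = M * Real.sqrt (∫ y in (0:ℝ)..π, ‖f y‖ ^ 2) := by
        rw [intervalIntegral.integral_const_mul, Real.sqrt_mul (sq_nonneg M),
          Real.sqrt_sq hM0]

lemma sqrt_int_const_mul (c : ℂ) (f : ℝ → ℂ) :
    Real.sqrt (∫ y in (0:ℝ)..π, ‖c * f y‖ ^ 2) =
      ‖c‖ * Real.sqrt (∫ y in (0:ℝ)..π, ‖f y‖ ^ 2) := by
  simp only [norm_mul, mul_pow]
  rw [intervalIntegral.integral_const_mul, Real.sqrt_mul (sq_nonneg _),
    Real.sqrt_sq (norm_nonneg c)]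

lemma star_mul_self_eq (z : ℂ) : star z * z = ((‖z‖ ^ 2 : ℝ) : ℂ) := by
  rw [Complex.star_def, mul_comm, Complex.mul_conj, Complex.normSq_eq_norm_sq]

theorem bloch_relative_bound
    (K₀ K₁ : ℝ) :
    ∃ α β : ℝ, 0 ≤ α ∧ 0 ≤ β ∧
      ∀ (b₀ b₁ : ℝ → ℂ), Continuous b₀ → Continuous b₁ →
        (∀ y, b₀ (y + π) = b₀ y) → (∀ y, b₁ (y + π) = b₁ y) →
        (∀ y, ‖b₀ y‖ ≤ K₀) → (∀ y, ‖b₁ y‖ ≤ K₁) →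
        ∀ θ ∈ Set.Icc (-π) π, ∀ u : ℝ → ℂ, ContDiff ℝ 2 u →
          (∀ y, u (y + π) = u y) →
          Real.sqrt (∫ y in (0:ℝ)..π,
              ‖b₁ y * (Complex.I * (θ : ℂ) * u y + (π : ℂ) * deriv u y)
                + b₀ y * u y‖ ^ 2)
            ≤ α * Real.sqrt (∫ y in (0:ℝ)..π, ‖u y‖ ^ 2)
              + β * Real.sqrt (∫ y in (0:ℝ)..π,
                  ‖(π : ℂ) ^ 2 * deriv (deriv u) y
                    + 2 * Complex.I * (θ : ℂ) * (π : ℂ) * deriv u y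
                    + ((4 * (π : ℂ) ^ 2 - (θ : ℂ) ^ 2)) * u y‖ ^ 2) := by
  set M₀ := max K₀ 0 with hM₀
  set M₁ := max K₁ 0 with hM₁
  have hM₀0 : 0 ≤ M₀ := le_max_right _ _
  have hM₁0 : 0 ≤ M₁ := le_max_right _ _
  refine ⟨M₀ + M₁ / 2 + 2 * π * M₁, M₁ / 2, by positivity, by positivity, ?_⟩
  intro b₀ b₁ hb₀c hb₁c _ _ hb₀ hb₁ θ _ u hu hper
  -- continuity facts
  have hcu : Continuous u := hu.continuous
  have hcdu : Continuous (deriv u) := hu.continuous_deriv (by norm_num)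
  have hu1 : ContDiff ℝ 1 (deriv u) := by
    have h2 : ContDiff ℝ (1 + 1) u := by norm_num; exact hu
    exact (contDiff_succ_iff_deriv.mp h2).2.2
  have hcddu : Continuous (deriv (deriv u)) := hu1.continuous_deriv le_rfl
  set Du : ℝ → ℂ := fun y => Complex.I * (θ : ℂ) * u y + (π : ℂ) * deriv u y with hDu
  have hcDu : Continuous Du :=
    (continuous_const.mul hcu).add (continuous_const.mul hcdu)
  set v : ℝ → ℂ := fun y => (π : ℂ) ^ 2 * deriv (deriv u) y
      + 2 * Complex.I * (θ : ℂ) * (π : ℂ) * deriv u y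
      + ((4 * (π : ℂ) ^ 2 - (θ : ℂ) ^ 2)) * u y with hv
  have hcv : Continuous v :=
    ((continuous_const.mul hcddu).add (continuous_const.mul hcdu)).add
      (continuous_const.mul hcu)
  set Nu := Real.sqrt (∫ y in (0:ℝ)..π, ‖u y‖ ^ 2) with hNu
  set Nv := Real.sqrt (∫ y in (0:ℝ)..π, ‖v y‖ ^ 2) with hNv
  set NDu := Real.sqrt (∫ y in (0:ℝ)..π, ‖Du y‖ ^ 2) with hNDu
  have hNu0 : 0 ≤ Nu := Real.sqrt_nonneg _
  have hNv0 : 0 ≤ Nv := Real.sqrt_nonneg _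
  have hNDu0 : 0 ≤ NDu := Real.sqrt_nonneg _
  -- key estimate on NDu via integration by parts
  set W : ℂ := ∫ y in (0:ℝ)..π, star (u y) *
      ((π:ℂ)^2 * deriv (deriv u) y + 2 * Complex.I * (θ:ℂ) * (π:ℂ) * deriv u y
        - (θ:ℂ)^2 * u y) with hW
  have hx : ((∫ y in (0:ℝ)..π, ‖Du y‖ ^ 2 : ℝ) : ℂ) = -W := by
    rw [← intervalIntegral.integral_ofReal]
    rw [hW, ← ibp_identity u hu hper θ]
    apply intervalIntegral.integral_congr
    intro y _
    exact (star_mul_self_eq (Du y)).symm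
  have hIDu : (∫ y in (0:ℝ)..π, ‖Du y‖ ^ 2) = ‖W‖ := by
    have h0 : (0:ℝ) ≤ ∫ y in (0:ℝ)..π, ‖Du y‖ ^ 2 :=
      intervalIntegral.integral_nonneg pi_pos.le (fun x _ => sq_nonneg _)
    calc (∫ y in (0:ℝ)..π, ‖Du y‖ ^ 2)
        = ‖((∫ y in (0:ℝ)..π, ‖Du y‖ ^ 2 : ℝ) : ℂ)‖ := by
          rw [Complex.norm_real, Real.norm_of_nonneg h0]
      _ = ‖-W‖ := by rw [hx]
      _ = ‖W‖ := norm_neg W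
  -- D²u = v - 4π² u
  have hD2v : ∀ y, (π:ℂ)^2 * deriv (deriv u) y
      + 2 * Complex.I * (θ:ℂ) * (π:ℂ) * deriv u y - (θ:ℂ)^2 * u y
      = v y + (-(4 * (π:ℂ)^2)) * u y := by
    intro y; rw [hv]; ring
  have hD2bound : Real.sqrt (∫ y in (0:ℝ)..π,
      ‖(π:ℂ)^2 * deriv (deriv u) y + 2 * Complex.I * (θ:ℂ) * (π:ℂ) * deriv u y
        - (θ:ℂ)^2 * u y‖ ^ 2) ≤ Nv + 4 * π ^ 2 * Nu := by
    have heq : (∫ y in (0:ℝ)..π,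
        ‖(π:ℂ)^2 * deriv (deriv u) y + 2 * Complex.I * (θ:ℂ) * (π:ℂ) * deriv u y
          - (θ:ℂ)^2 * u y‖ ^ 2) =
        ∫ y in (0:ℝ)..π, ‖v y + (-(4 * (π:ℂ)^2)) * u y‖ ^ 2 := by
      apply intervalIntegral.integral_congr
      intro y _
      simp only [hD2v]
    rw [heq]
    calc Real.sqrt (∫ y in (0:ℝ)..π, ‖v y + (-(4 * (π:ℂ)^2)) * u y‖ ^ 2)
        ≤ Nv + Real.sqrt (∫ y in (0:ℝ)..π, ‖(-(4 * (π:ℂ)^2)) * u y‖ ^ 2) :=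
          minkowski_integral v _ hcv (continuous_const.mul hcu)
      _ = Nv + 4 * π ^ 2 * Nu := by
          rw [sqrt_int_const_mul]
          congr 1
          have : ‖(-(4 * (π:ℂ)^2))‖ = 4 * π ^ 2 := by
            rw [norm_neg]
            have : (4 * (π:ℂ)^2) = ((4 * π ^ 2 : ℝ) : ℂ) := by push_cast; ring
            rw [this, Complex.norm_real, Real.norm_of_nonneg (by positivity)]
          rw [this]
  have hWbound : ‖W‖ ≤ Nu * (Nv + 4 * π ^ 2 * Nu) := by
    have hcs := cs_integral' (fun y => star (u y))
      (fun y => (π:ℂ)^2 * deriv (deriv u) y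
        + 2 * Complex.I * (θ:ℂ) * (π:ℂ) * deriv u y - (θ:ℂ)^2 * u y)
      (continuous_star.comp hcu)
      (((continuous_const.mul hcddu).add (continuous_const.mul hcdu)).sub
        (continuous_const.mul hcu))
    have hstar : (∫ y in (0:ℝ)..π, ‖star (u y)‖ ^ 2) = ∫ y in (0:ℝ)..π, ‖u y‖ ^ 2 := by
      apply intervalIntegral.integral_congr
      intro y _
      simp [norm_star]
    rw [hstar] at hcs
    calc ‖W‖ ≤ _ := hcs
      _ ≤ Nu * (Nv + 4 * π ^ 2 * Nu) :=
        mul_le_mul_of_nonneg_left hD2bound hNu0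
  have hNDu2 : NDu ^ 2 ≤ Nu * (Nv + 4 * π ^ 2 * Nu) := by
    rw [hNDu, sq_sqrt_integral, hIDu]
    exact hWbound
  have hNDule : NDu ≤ (Nu + Nv) / 2 + 2 * π * Nu := by
    have hsq : NDu ^ 2 ≤ ((Nu + Nv) / 2 + 2 * π * Nu) ^ 2 := by
      nlinarith [sq_nonneg (Nu - Nv), pi_pos, mul_nonneg hNu0 hNv0,
        mul_nonneg (mul_nonneg pi_pos.le hNu0) hNv0, sq_nonneg Nu]
    have hR0 : 0 ≤ (Nu + Nv) / 2 + 2 * π * Nu := by positivity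
    rw [← Real.sqrt_sq hNDu0, ← Real.sqrt_sq hR0]
    exact Real.sqrt_le_sqrt hsq
  -- final chain
  have hb₀' : ∀ y, ‖b₀ y‖ ≤ M₀ := fun y => le_trans (hb₀ y) (le_max_left _ _)
  have hb₁' : ∀ y, ‖b₁ y‖ ≤ M₁ := fun y => le_trans (hb₁ y) (le_max_left _ _)
  calc Real.sqrt (∫ y in (0:ℝ)..π, ‖b₁ y * Du y + b₀ y * u y‖ ^ 2)
      ≤ Real.sqrt (∫ y in (0:ℝ)..π, ‖b₁ y * Du y‖ ^ 2)
        + Real.sqrt (∫ y in (0:ℝ)..π, ‖b₀ y * u y‖ ^ 2) :=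
        minkowski_integral _ _ (hb₁c.mul hcDu) (hb₀c.mul hcu)
    _ ≤ M₁ * NDu + M₀ * Nu :=
        add_le_add (sqrt_int_mul_le b₁ Du hb₁c hcDu M₁ hb₁')
          (sqrt_int_mul_le b₀ u hb₀c hcu M₀ hb₀')
    _ ≤ M₁ * ((Nu + Nv) / 2 + 2 * π * Nu) + M₀ * Nu := by
        have := mul_le_mul_of_nonneg_left hNDule hM₁0
        linarith
    _ = (M₀ + M₁ / 2 + 2 * π * M₁) * Nu + (M₁ / 2) * Nv := by ring
end

section
/- Let b₀, b₁ : ℝ → ℝ be continuous, and suppose b₁(z) → b_∞ as z → +∞ and as z → −∞ for some b_∞ ≠ 0. Let ζ : ℝ → ℝ be twice continuously differentiable, not identically zero, satisfying ζ''(z) + b₁(z)ζ'(z) + b₀(z)ζ(z) = 0 for all z ∈ ℝ and ζ(z) → 0, ζ'(z) → 0 as z → ±∞. Then every twice continuously differentiable solution u : ℝ → ℝ of u'' + b₁u' + b₀u = 0 on ℝ such that u and u' have finite limits as z → ±∞ and u'(z) → 0 as z → ±∞ is a constant multiple of ζ: there exists k ∈ ℝ with u = kζ. -/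
open Filter Topology Set

lemma second_order_unique (b₀ b₁ : ℝ → ℝ) (hb₀ : Continuous b₀) (hb₁ : Continuous b₁)
    (w : ℝ → ℝ) (hw : Differentiable ℝ w) (hw' : Differentiable ℝ (deriv w))
    (heq : ∀ z, deriv (deriv w) z = -(b₁ z * deriv w z) - b₀ z * w z)
    (z₀ : ℝ) (h0 : w z₀ = 0) (h0' : deriv w z₀ = 0) : ∀ z, w z = 0 := by
  intro z
  set a : ℝ := min z z₀ - 1 with ha
  set b : ℝ := max z z₀ + 1 with hb
  have hab : a < b := by
    have h1 : min z z₀ ≤ max z z₀ := le_trans (min_le_left _ _) (le_max_left _ _)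
    simp only [ha, hb]; linarith
  have hz₀ : z₀ ∈ Ioo a b := by
    constructor
    · simp only [ha]; have := min_le_right z z₀; linarith
    · simp only [hb]; have := le_max_right z z₀; linarith
  have hz : z ∈ Icc a b := by
    constructor
    · simp only [ha]; have := min_le_left z z₀; linarith
    · simp only [hb]; have := le_max_left z z₀; linarith
  -- clamp
  set c : ℝ → ℝ := fun t => max a (min t b) with hc
  have hcmem : ∀ t, c t ∈ Icc a b := by
    intro t
    constructor
    · exact le_max_left _ _
    · exact max_le hab.le (min_le_right _ _)
  have hceq : ∀ t ∈ Ioo a b, c t = t := by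
    intro t ht
    simp only [hc]
    rw [min_eq_left ht.2.le, max_eq_right ht.1.le]
  -- bounds
  obtain ⟨M₀, hM₀⟩ := (isCompact_Icc (a := a) (b := b)).exists_bound_of_continuousOn
    hb₀.continuousOn
  obtain ⟨M₁, hM₁⟩ := (isCompact_Icc (a := a) (b := b)).exists_bound_of_continuousOn
    hb₁.continuousOn
  have hM₀0 : 0 ≤ M₀ := le_trans (norm_nonneg _) (hM₀ a ⟨le_refl a, hab.le⟩)
  have hM₁0 : 0 ≤ M₁ := le_trans (norm_nonneg _) (hM₁ a ⟨le_refl a, hab.le⟩)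
  set Kr : ℝ := max 1 (M₀ + M₁) with hKr
  have hKr1 : (1:ℝ) ≤ Kr := le_max_left _ _
  set K : NNReal := Real.toNNReal Kr with hK
  have hKco : (K : ℝ) = Kr := Real.coe_toNNReal _ (by linarith)
  set v : ℝ → ℝ × ℝ → ℝ × ℝ :=
    fun t y => (y.2, -(b₁ (c t) * y.2) - b₀ (c t) * y.1) with hv
  have hlip : ∀ t, LipschitzWith K (v t) := by
    intro t
    apply LipschitzWith.of_dist_le_mul
    intro x y
    rw [hKco]
    simp only [hv, Prod.dist_eq, Real.dist_eq]
    have hb0 : ‖b₀ (c t)‖ ≤ M₀ := hM₀ _ (hcmem t)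
    have hb1 : ‖b₁ (c t)‖ ≤ M₁ := hM₁ _ (hcmem t)
    rw [Real.norm_eq_abs] at hb0 hb1
    apply max_le
    · calc |x.2 - y.2| ≤ max |x.1 - y.1| |x.2 - y.2| := le_max_right _ _
        _ ≤ Kr * max |x.1 - y.1| |x.2 - y.2| := by
            nlinarith [le_max_left |x.1 - y.1| |x.2 - y.2|, abs_nonneg (x.1 - y.1),
              abs_nonneg (x.2 - y.2), le_max_right |x.1 - y.1| |x.2 - y.2|]
    · have e1 : -(b₁ (c t) * x.2) - b₀ (c t) * x.1 - (-(b₁ (c t) * y.2) - b₀ (c t) * y.1)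
          = -(b₁ (c t) * (x.2 - y.2)) - b₀ (c t) * (x.1 - y.1) := by ring
      rw [e1]
      calc |(-(b₁ (c t) * (x.2 - y.2)) - b₀ (c t) * (x.1 - y.1))|
          ≤ |b₁ (c t) * (x.2 - y.2)| + |b₀ (c t) * (x.1 - y.1)| := by
            apply (abs_sub _ _).trans; rw [abs_neg]
        _ = |b₁ (c t)| * |x.2 - y.2| + |b₀ (c t)| * |x.1 - y.1| := by rw [abs_mul, abs_mul]
        _ ≤ M₁ * max |x.1 - y.1| |x.2 - y.2| + M₀ * max |x.1 - y.1| |x.2 - y.2| :=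
            add_le_add
              (mul_le_mul hb1 (le_max_right _ _) (abs_nonneg _) hM₁0)
              (mul_le_mul hb0 (le_max_left _ _) (abs_nonneg _) hM₀0)
        _ = (M₀ + M₁) * max |x.1 - y.1| |x.2 - y.2| := by ring
        _ ≤ Kr * max |x.1 - y.1| |x.2 - y.2| := by
            have := le_max_right (1:ℝ) (M₀ + M₁)
            nlinarith [abs_nonneg (x.1 - y.1), le_max_left |x.1 - y.1| |x.2 - y.2|]
  set f : ℝ → ℝ × ℝ := fun t => (w t, deriv w t) with hf
  set g : ℝ → ℝ × ℝ := fun _ => ((0:ℝ), (0:ℝ)) with hg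
  have key : EqOn f g (Icc a b) := by
    apply ODE_solution_unique_of_mem_Icc (s := fun _ => univ)
      (fun t _ => (hlip t).lipschitzOnWith) hz₀
    · exact (hw.continuous.prodMk hw'.continuous).continuousOn
    · intro t ht
      have h1 : HasDerivAt w (deriv w t) t := (hw t).hasDerivAt
      have h2 : HasDerivAt (deriv w) (deriv (deriv w) t) t := (hw' t).hasDerivAt
      have : v t (f t) = (deriv w t, deriv (deriv w) t) := by
        simp only [hv, hf, hceq t ht, heq t]
      rw [this]
      exact h1.prodMk h2
    · intro t _; trivial
    · exact continuousOn_const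
    · intro t _
      have : v t (g t) = (0, 0) := by simp [hv, hg]
      rw [this]
      exact hasDerivAt_const _ _
    · intro t _; trivial
    · simp [hf, hg, h0, h0']
  have h2 := congrArg Prod.fst (key hz)
  simpa [hf, hg] using h2

open Filter Topology Set intervalIntegral

lemma B_atBot_of_neg (b₁ : ℝ → ℝ) (hb₁ : Continuous b₁) (binf : ℝ) (hneg : binf < 0)
    (h : Tendsto b₁ atTop (𝓝 binf)) :
    Tendsto (fun z => ∫ t in (0:ℝ)..z, b₁ t) atTop atBot := by
  have hhalf : binf < binf / 2 := by linarith
  obtain ⟨T, hT⟩ := (eventually_atTop.mp (h.eventually_le_const hhalf))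
  apply tendsto_atBot_mono' atTop (f₁ := fun z =>
    (∫ t in (0:ℝ)..T, b₁ t) + (binf / 2) * z - (binf / 2) * T)
  · filter_upwards [eventually_ge_atTop T] with z hz
    have hsplit : (∫ t in (0:ℝ)..T, b₁ t) + (∫ t in T..z, b₁ t) = ∫ t in (0:ℝ)..z, b₁ t :=
      integral_add_adjacent_intervals (hb₁.intervalIntegrable _ _) (hb₁.intervalIntegrable _ _)
    have hmono : (∫ t in T..z, b₁ t) ≤ ∫ t in T..z, (binf / 2 : ℝ) := by
      apply integral_mono_on hz (hb₁.intervalIntegrable _ _) intervalIntegrable_const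
      intro t ht
      exact hT t ht.1
    rw [integral_const, smul_eq_mul] at hmono
    linarith
  · have h1 : Tendsto (fun z : ℝ => (binf / 2) * z) atTop atBot :=
      (tendsto_const_mul_atBot_of_neg (by linarith)).mpr tendsto_id
    exact tendsto_atBot_add_const_right _ _ (tendsto_atBot_add_const_left _ _ h1)

lemma B_atBot_of_pos (b₁ : ℝ → ℝ) (hb₁ : Continuous b₁) (binf : ℝ) (hpos : 0 < binf)
    (h : Tendsto b₁ atBot (𝓝 binf)) :
    Tendsto (fun z => ∫ t in (0:ℝ)..z, b₁ t) atBot atBot := by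
  have hhalf : binf / 2 < binf := by linarith
  obtain ⟨T, hT⟩ := (eventually_atBot.mp (h.eventually_const_le hhalf))
  apply tendsto_atBot_mono' atBot (f₁ := fun z =>
    (∫ t in (0:ℝ)..T, b₁ t) + (binf / 2) * z - (binf / 2) * T)
  · filter_upwards [eventually_le_atBot T] with z hz
    have hsplit : (∫ t in (0:ℝ)..T, b₁ t) + (∫ t in T..z, b₁ t) = ∫ t in (0:ℝ)..z, b₁ t :=
      integral_add_adjacent_intervals (hb₁.intervalIntegrable _ _) (hb₁.intervalIntegrable _ _)
    -- ∫ t in T..z = -∫ t in z..T, and ∫_z^T b₁ ≥ binf/2 (T - z)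
    have hmono : (∫ t in z..T, (binf / 2 : ℝ)) ≤ ∫ t in z..T, b₁ t := by
      apply integral_mono_on hz intervalIntegrable_const (hb₁.intervalIntegrable _ _)
      intro t ht
      exact hT t ht.2
    rw [integral_const, smul_eq_mul] at hmono
    have hswap : (∫ t in T..z, b₁ t) = -∫ t in z..T, b₁ t := integral_symm _ _
    nlinarith
  · have h1 : Tendsto (fun z : ℝ => (binf / 2) * z) atBot atBot :=
      (tendsto_const_mul_atBot_of_pos (by linarith)).mpr tendsto_id
    exact tendsto_atBot_add_const_right _ _ (tendsto_atBot_add_const_left _ _ h1)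

open Filter Topology

section helpers
open Set intervalIntegral

lemma aux_diff (f : ℝ → ℝ) (h : ContDiff ℝ 2 f) :
    Differentiable ℝ f ∧ Differentiable ℝ (deriv f) := by
  have h2 : (2 : WithTop ℕ∞) = 1 + 1 := by norm_num
  rw [h2, contDiff_succ_iff_deriv] at h
  exact ⟨h.1, h.2.2.differentiable one_ne_zero⟩

end helpers

theorem decaying_solution_unique_up_to_scalar
    (b₀ b₁ : ℝ → ℝ) (hb₀ : Continuous b₀) (hb₁ : Continuous b₁)
    (binf : ℝ) (hbinf : binf ≠ 0)
    (hb₁top : Tendsto b₁ atTop (𝓝 binf)) (hb₁bot : Tendsto b₁ atBot (𝓝 binf))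
    (ζ : ℝ → ℝ) (hζ : ContDiff ℝ 2 ζ) (hζne : ζ ≠ 0)
    (hζeq : ∀ z, deriv (deriv ζ) z + b₁ z * deriv ζ z + b₀ z * ζ z = 0)
    (hζtop : Tendsto ζ atTop (𝓝 0)) (hζbot : Tendsto ζ atBot (𝓝 0))
    (hζ'top : Tendsto (deriv ζ) atTop (𝓝 0)) (hζ'bot : Tendsto (deriv ζ) atBot (𝓝 0))
    (u : ℝ → ℝ) (hu : ContDiff ℝ 2 u)
    (hueq : ∀ z, deriv (deriv u) z + b₁ z * deriv u z + b₀ z * u z = 0)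
    (hutop : ∃ L : ℝ, Tendsto u atTop (𝓝 L))
    (hubot : ∃ L : ℝ, Tendsto u atBot (𝓝 L))
    (hu'top : Tendsto (deriv u) atTop (𝓝 0))
    (hu'bot : Tendsto (deriv u) atBot (𝓝 0)) :
    ∃ k : ℝ, u = fun z => k * ζ z := by
  obtain ⟨hud, hu'd⟩ := aux_diff u hu
  obtain ⟨hζd, hζ'd⟩ := aux_diff ζ hζ
  set W : ℝ → ℝ := fun z => ζ z * deriv u z - u z * deriv ζ z with hWdef
  have hW : ∀ z, HasDerivAt W (-(b₁ z) * W z) z := by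
    intro z
    have h1 : HasDerivAt W
        ((deriv ζ z * deriv u z + ζ z * deriv (deriv u) z)
          - (deriv u z * deriv ζ z + u z * deriv (deriv ζ) z)) z :=
      (((hζd z).hasDerivAt.mul (hu'd z).hasDerivAt).sub
        ((hud z).hasDerivAt.mul (hζ'd z).hasDerivAt))
    convert h1 using 1
    have e1' : deriv (deriv u) z = -(b₁ z * deriv u z) - b₀ z * u z := by
      have := hueq z; linarith
    have e2' : deriv (deriv ζ) z = -(b₁ z * deriv ζ z) - b₀ z * ζ z := by
      have := hζeq z; linarith
    simp only [hWdef]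
    rw [e1', e2']
    ring
  set B : ℝ → ℝ := fun z => ∫ t in (0:ℝ)..z, b₁ t with hBdef
  have hB : ∀ z, HasDerivAt B (b₁ z) z := fun z =>
    (hb₁.integral_hasStrictDerivAt 0 z).hasDerivAt
  set G : ℝ → ℝ := fun z => W z * Real.exp (B z) with hGdef
  have hG : ∀ z, HasDerivAt G 0 z := by
    intro z
    have h1 : HasDerivAt G
        ((-(b₁ z) * W z) * Real.exp (B z) + W z * (Real.exp (B z) * b₁ z)) z :=
      (hW z).mul (hB z).exp
    convert h1 using 1
    ring
  have hconst : ∀ z, G z = W 0 := by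
    intro z
    have h1 : G z = G 0 :=
      is_const_of_deriv_eq_zero (fun x => (hG x).differentiableAt)
        (fun x => (hG x).deriv) z 0
    rw [h1]
    show W 0 * Real.exp (B 0) = W 0
    have hB0 : B 0 = 0 := intervalIntegral.integral_same
    rw [hB0, Real.exp_zero, mul_one]
  have hW0 : W 0 = 0 := by
    rcases hbinf.lt_or_gt with hneg | hpos
    · have hBtop : Tendsto B atTop atBot := B_atBot_of_neg b₁ hb₁ binf hneg hb₁top
      obtain ⟨L, hL⟩ := hutop
      have hWtop : Tendsto W atTop (𝓝 0) := by
        have := (hζtop.mul hu'top).sub (hL.mul hζ'top)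
        simpa using this
      have hGtop : Tendsto G atTop (𝓝 0) := by
        have := hWtop.mul (Real.tendsto_exp_atBot.comp hBtop)
        simpa using this
      have h2 : Tendsto (fun _ : ℝ => W 0) atTop (𝓝 0) := hGtop.congr hconst
      exact tendsto_nhds_unique tendsto_const_nhds h2
    · have hBbot : Tendsto B atBot atBot := B_atBot_of_pos b₁ hb₁ binf hpos hb₁bot
      obtain ⟨L, hL⟩ := hubot
      have hWbot : Tendsto W atBot (𝓝 0) := by
        have := (hζbot.mul hu'bot).sub (hL.mul hζ'bot)
        simpa using this
      have hGbot : Tendsto G atBot (𝓝 0) := by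
        have := hWbot.mul (Real.tendsto_exp_atBot.comp hBbot)
        simpa using this
      have h2 : Tendsto (fun _ : ℝ => W 0) atBot (𝓝 0) := hGbot.congr hconst
      exact tendsto_nhds_unique tendsto_const_nhds h2
  have hWzero : ∀ z, W z = 0 := by
    intro z
    have h1 : W z * Real.exp (B z) = 0 := by
      rw [show W z * Real.exp (B z) = G z from rfl, hconst z, hW0]
    exact (mul_eq_zero.mp h1).resolve_right (Real.exp_ne_zero _)
  obtain ⟨z₀, hz₀⟩ := Function.ne_iff.mp hζne
  have hz0 : ζ z₀ ≠ 0 := hz₀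
  set k : ℝ := u z₀ / ζ z₀ with hk
  set w : ℝ → ℝ := fun z => u z - k * ζ z with hwdef
  have hwd : Differentiable ℝ w := hud.sub (hζd.const_mul k)
  have hw' : ∀ z, deriv w z = deriv u z - k * deriv ζ z := by
    intro z
    exact ((hud z).hasDerivAt.sub ((hζd z).hasDerivAt.const_mul k)).deriv
  have hw'd : Differentiable ℝ (deriv w) := by
    have : deriv w = fun z => deriv u z - k * deriv ζ z := funext hw'
    rw [this]
    exact hu'd.sub (hζ'd.const_mul k)
  have hw'' : ∀ z, deriv (deriv w) z = -(b₁ z * deriv w z) - b₀ z * w z := by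
    intro z
    have hrw : deriv w = fun z => deriv u z - k * deriv ζ z := funext hw'
    have h1 : deriv (deriv w) z = deriv (deriv u) z - k * deriv (deriv ζ) z := by
      rw [hrw]
      exact ((hu'd z).hasDerivAt.sub ((hζ'd z).hasDerivAt.const_mul k)).deriv
    rw [h1, hw' z]
    have e1' : deriv (deriv u) z = -(b₁ z * deriv u z) - b₀ z * u z := by
      have := hueq z; linarith
    have e2' : deriv (deriv ζ) z = -(b₁ z * deriv ζ z) - b₀ z * ζ z := by
      have := hζeq z; linarith
    simp only [hwdef]
    rw [e1', e2']
    ring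
  have h0 : w z₀ = 0 := by
    show u z₀ - k * ζ z₀ = 0
    rw [hk]
    field_simp
    ring
  have h0' : deriv w z₀ = 0 := by
    have hWz := hWzero z₀
    simp only [hWdef] at hWz
    rw [hw' z₀, hk, sub_eq_zero, div_mul_eq_mul_div, eq_div_iff hz0]
    linarith [hWz]
  have := second_order_unique b₀ b₁ hb₀ hb₁ w hwd hw'd hw'' z₀ h0 h0'
  refine ⟨k, funext fun z => ?_⟩
  have hz := this z
  simp only [hwdef] at hz
  linarith
end

section
/- Let b : ℝ → ℝ be continuous with b(z) → b_∞ as z → +∞ and as z → −∞, where b_∞ ≠ 0. If w : ℝ → ℝ is continuously differentiable with w'(z) = −b(z) w(z) for all z ∈ ℝ, and w(z) → 0 both as z → +∞ and as z → −∞, then w ≡ 0. -/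
open Filter Topology intervalIntegral

lemma wz_zero_of_zero (b : ℝ → ℝ) (hb : Continuous b)
    (w : ℝ → ℝ) (hw : ContDiff ℝ 1 w)
    (hweq : ∀ z, deriv w z = -b z * w z)
    (z0 : ℝ) (h0 : w z0 = 0) : ∀ z, w z = 0 := by
  set B : ℝ → ℝ := fun z => ∫ t in z0..z, b t with hBdef
  have hB : ∀ z, HasDerivAt B (b z) z := fun z =>
    intervalIntegral.integral_hasDerivAt_right (hb.intervalIntegrable _ _)
      (hb.stronglyMeasurableAtFilter _ _) hb.continuousAt
  have hwd : Differentiable ℝ w := hw.differentiable one_ne_zero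
  set h : ℝ → ℝ := fun z => w z * Real.exp (B z) with hhdef
  have hh : ∀ z, HasDerivAt h 0 z := by
    intro z
    have := ((hwd z).hasDerivAt.mul ((hB z).exp))
    have e : deriv w z * Real.exp (B z) + w z * (Real.exp (B z) * b z) = 0 := by
      rw [hweq]; ring
    exact this.congr_deriv e
  have hconst : ∀ z, h z = h z0 := by
    intro z
    have : ∀ x, deriv h x = 0 := fun x => (hh x).deriv
    exact is_const_of_deriv_eq_zero (fun x => (hh x).differentiableAt) this z z0
  intro z
  have := hconst z
  simp only [hhdef, h0, zero_mul] at this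
  have hexp : Real.exp (B z) ≠ 0 := Real.exp_ne_zero _
  exact (mul_eq_zero.mp this).resolve_right hexp

theorem wronskian_vanishes
    (b : ℝ → ℝ) (hb : Continuous b)
    (binf : ℝ) (hbinf : binf ≠ 0)
    (hbtop : Tendsto b atTop (𝓝 binf)) (hbbot : Tendsto b atBot (𝓝 binf))
    (w : ℝ → ℝ) (hw : ContDiff ℝ 1 w)
    (hweq : ∀ z, deriv w z = -b z * w z)
    (hwtop : Tendsto w atTop (𝓝 0)) (hwbot : Tendsto w atBot (𝓝 0)) :
    ∀ z, w z = 0 := by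
  have hwd : Differentiable ℝ w := hw.differentiable one_ne_zero
  set g : ℝ → ℝ := fun z => w z * w z with hgdef
  have hg : ∀ z, HasDerivAt g (-2 * b z * (w z * w z)) z := by
    intro z
    have := (hwd z).hasDerivAt.mul (hwd z).hasDerivAt
    rw [hweq] at this
    exact this.congr_deriv (by ring)
  have hgd : Differentiable ℝ g := fun z => (hg z).differentiableAt
  have hgnn : ∀ z, 0 ≤ g z := fun z => mul_self_nonneg _
  -- it suffices to find a zero of w
  suffices hz : ∃ z0, w z0 = 0 by
    obtain ⟨z0, h0⟩ := hz
    exact wz_zero_of_zero b hb w hw hweq z0 h0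
  rcases hbinf.lt_or_gt with hneg | hpos
  · -- binf < 0 : b ≤ 0 eventually at top, g monotone on [M, ∞), g → 0 at top
    have hev : ∀ᶠ t in atTop, b t ≤ 0 :=
      hbtop.eventually (eventually_le_nhds hneg)
    obtain ⟨M, hM⟩ := hev.exists_forall_of_atTop
    have hmono : MonotoneOn g (Set.Ici M) := by
      apply monotoneOn_of_deriv_nonneg (convex_Ici M) (hgd.continuous.continuousOn)
        (fun z _ => (hgd z).differentiableWithinAt)
      intro z hz
      rw [(hg z).deriv]
      have hbz : b z ≤ 0 := hM z (le_of_lt (by simpa using hz))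
      nlinarith [mul_self_nonneg (w z)]
    have hgtop : Tendsto g atTop (𝓝 0) := by
      simpa using hwtop.mul hwtop
    have hle : g (M + 1) ≤ 0 := by
      refine ge_of_tendsto hgtop ?_
      filter_upwards [eventually_ge_atTop (M + 1)] with z hz
      exact hmono (Set.mem_Ici.mpr (by linarith)) (Set.mem_Ici.mpr (by linarith)) hz
    have : g (M + 1) = 0 := le_antisymm hle (hgnn _)
    exact ⟨M + 1, mul_self_eq_zero.mp this⟩
  · -- binf > 0 : b ≥ 0 eventually at bot, g antitone on (-∞, M], g → 0 at bot
    have hev : ∀ᶠ t in atBot, 0 ≤ b t :=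
      hbbot.eventually (eventually_ge_nhds hpos)
    obtain ⟨M, hM⟩ := hev.exists_forall_of_atBot
    have hanti : AntitoneOn g (Set.Iic M) := by
      apply antitoneOn_of_deriv_nonpos (convex_Iic M) (hgd.continuous.continuousOn)
        (fun z _ => (hgd z).differentiableWithinAt)
      intro z hz
      rw [(hg z).deriv]
      have hbz : 0 ≤ b z := hM z (le_of_lt (by simpa using hz))
      nlinarith [mul_self_nonneg (w z)]
    have hgbot : Tendsto g atBot (𝓝 0) := by
      simpa using hwbot.mul hwbot
    have hle : g (M - 1) ≤ 0 := by
      refine ge_of_tendsto hgbot ?_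
      filter_upwards [eventually_le_atBot (M - 1)] with z hz
      exact hanti (Set.mem_Iic.mpr (by linarith)) (Set.mem_Iic.mpr (by linarith)) hz
    have : g (M - 1) = 0 := le_antisymm hle (hgnn _)
    exact ⟨M - 1, mul_self_eq_zero.mp this⟩
end
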